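/- For any constants $a > 0$, $b \ge 0$, $c \ge 0$, the integral $\int_0^c \sqrt{\log(1 + b\,\varepsilon^{-1/a})}\, d\varepsilon$ is at most $c \sqrt{a^{-1} + \log(1 + b c^{-1/a})}$. -/

import Mathlib

open MeasureTheory

lemma log_sub_log_integrableOn (c : ℝ) (hc : 0 < c) :
    IntegrableOn (fun ε : ℝ => Real.log c - Real.log ε) (Set.Ioc 0 c) ∧
    ∫ ε in Set.Ioc (0:ℝ) c, (Real.log c - Real.log ε) = c := by
  set F : ℝ → ℝ := fun ε : ℝ => ε * Real.log c - ε * Real.log ε + ε with hF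
  have hcont : ContinuousOn F (Set.Icc 0 c) :=
    (((continuous_id.mul continuous_const).sub Real.continuous_mul_log).add
      continuous_id).continuousOn
  have hderiv : ∀ x ∈ Set.Ioo (0:ℝ) c,
      HasDerivAt F (Real.log c - Real.log x) x := by
    intro x hx
    have h1 : HasDerivAt (fun ε : ℝ => ε * Real.log c) (Real.log c) x := by
      simpa using (hasDerivAt_id x).mul_const (Real.log c)
    have h2 : HasDerivAt (fun ε : ℝ => ε * Real.log ε) (Real.log x + 1) x := by
      have := (hasDerivAt_id' x).mul (Real.hasDerivAt_log (ne_of_gt hx.1))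
      exact this.congr_deriv (by simp [mul_inv_cancel₀ (ne_of_gt hx.1), add_comm])
    have := (h1.sub h2).add (hasDerivAt_id' x)
    exact this.congr_deriv (by ring)
  have hint : IntegrableOn (fun ε : ℝ => Real.log c - Real.log ε) (Set.Ioc 0 c) :=
    intervalIntegral.integrableOn_deriv_of_nonneg hcont hderiv
      (fun x hx => sub_nonneg.2 (Real.log_le_log hx.1 hx.2.le))
  refine ⟨hint, ?_⟩
  have hii : IntervalIntegrable (fun ε : ℝ => Real.log c - Real.log ε) volume 0 c := by
    rw [intervalIntegrable_iff_integrableOn_Ioc_of_le hc.le]; exact hint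
  have := intervalIntegral.integral_eq_sub_of_hasDeriv_right_of_le hc.le hcont
    (fun x hx => (hderiv x hx).hasDerivWithinAt) hii
  rw [intervalIntegral.integral_of_le hc.le] at this
  rw [this]
  simp [hF]

/-- For `a > 0`, `b ≥ 0`, `c ≥ 0`,
`∫_0^c √(log(1 + b ε^{-1/a})) dε ≤ c √(a⁻¹ + log(1 + b c^{-1/a}))`. -/
theorem stmt_1 (a b c : ℝ) (ha : 0 < a) (hb : 0 ≤ b) (hc : 0 ≤ c) :
    ∫ ε in Set.Ioc (0:ℝ) c, Real.sqrt (Real.log (1 + b * ε ^ (-(1/a))))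
      ≤ c * Real.sqrt (a⁻¹ + Real.log (1 + b * c ^ (-(1/a)))) := by
  rcases eq_or_lt_of_le hc with rfl | hc
  · simp
  set L : ℝ := Real.log (1 + b * c ^ (-(1/a))) with hL
  have hL0 : 0 ≤ L := Real.log_nonneg (by
    have : 0 ≤ b * c ^ (-(1/a)) := mul_nonneg hb (Real.rpow_nonneg hc.le _)
    linarith)
  set K : ℝ := a⁻¹ + L with hK
  have hK0 : 0 < K := by positivity
  have hsK : 0 < Real.sqrt K := Real.sqrt_pos.2 hK0
  -- the majorant
  set H : ℝ → ℝ := fun ε => (L + K + a⁻¹ * (Real.log c - Real.log ε)) / (2 * Real.sqrt K)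
    with hH
  obtain ⟨hint, hval⟩ := log_sub_log_integrableOn c hc
  have hHint : IntegrableOn H (Set.Ioc 0 c) := by
    have : IntegrableOn (fun ε : ℝ => L + K + a⁻¹ * (Real.log c - Real.log ε))
        (Set.Ioc 0 c) := (integrableOn_const measure_Ioc_lt_top.ne).add
          (hint.const_mul _)
    simpa [hH, div_eq_mul_inv, IntegrableOn] using this.mul_const (2 * Real.sqrt K)⁻¹
  -- pointwise bound
  have hmono : ∀ ε ∈ Set.Ioc (0:ℝ) c,
      Real.sqrt (Real.log (1 + b * ε ^ (-(1/a)))) ≤ H ε := by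
    intro ε hε
    obtain ⟨hε0, hεc⟩ := hε
    set x : ℝ := Real.log (1 + b * ε ^ (-(1/a))) with hx
    have hεp : (0:ℝ) < ε ^ (-(1/a)) := Real.rpow_pos_of_pos hε0 _
    have hx0 : 0 ≤ x := Real.log_nonneg (by nlinarith)
    -- x ≤ L + a⁻¹ * (log c - log ε)
    have hxle : x ≤ L + a⁻¹ * (Real.log c - Real.log ε) := by
      have ht1 : (1:ℝ) ≤ (c / ε) ^ (1/a : ℝ) :=
        Real.one_le_rpow ((one_le_div hε0).2 hεc) (by positivity)
      have hprod : b * ε ^ (-(1/a)) = b * c ^ (-(1/a)) * (c / ε) ^ (1/a : ℝ) := by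
        rw [Real.div_rpow hc.le hε0.le, Real.rpow_neg hc.le, Real.rpow_neg hε0.le]
        field_simp
      have harg : 1 + b * ε ^ (-(1/a))
          ≤ (1 + b * c ^ (-(1/a))) * (c / ε) ^ (1/a : ℝ) := by
        rw [hprod, add_mul, one_mul]
        linarith
      have hpos1 : (0:ℝ) < 1 + b * c ^ (-(1/a)) := by
        have : 0 ≤ b * c ^ (-(1/a)) := mul_nonneg hb (Real.rpow_nonneg hc.le _)
        linarith
      have := Real.log_le_log (by positivity) harg
      rw [Real.log_mul (ne_of_gt hpos1) (by positivity),
        Real.log_rpow (by positivity), Real.log_div (ne_of_gt hc) (ne_of_gt hε0)]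
        at this
      calc x ≤ L + 1/a * (Real.log c - Real.log ε) := this
        _ = L + a⁻¹ * (Real.log c - Real.log ε) := by rw [one_div]
    -- √x ≤ (x + K)/(2√K)
    have hsqrt : Real.sqrt x ≤ (x + K) / (2 * Real.sqrt K) := by
      rw [le_div_iff₀ (by positivity)]
      nlinarith [sq_nonneg (Real.sqrt x - Real.sqrt K), Real.sq_sqrt hx0,
        Real.sq_sqrt hK0.le, Real.sqrt_nonneg x]
    refine hsqrt.trans ?_
    rw [hH]
    apply div_le_div_of_nonneg_right _ (by positivity)
    · linarith
  -- integrate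
  have hbound := integral_mono_of_nonneg
    (Filter.Eventually.of_forall fun ε => Real.sqrt_nonneg _) hHint
    ((ae_restrict_iff' measurableSet_Ioc).2 (Filter.Eventually.of_forall hmono))
  refine hbound.trans ?_
  have hIH : ∫ ε in Set.Ioc (0:ℝ) c, H ε
      = ((L + K) * c + a⁻¹ * c) / (2 * Real.sqrt K) := by
    rw [hH]
    simp only [div_eq_mul_inv]
    rw [integral_mul_const]
    congr 1
    rw [integral_add (integrableOn_const (C := L + K) measure_Ioc_lt_top.ne) (hint.const_mul _),
      integral_const_mul, hval, setIntegral_const]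
    simp [Real.volume_Ioc, ENNReal.toReal_ofReal hc.le, mul_comm, hc.le]
  rw [hIH]
  have h2K : (L + K) * c + a⁻¹ * c = 2 * K * c := by rw [hK]; ring
  rw [h2K]
  rw [div_le_iff₀ (by positivity)]
  have : Real.sqrt K * Real.sqrt K = K := Real.mul_self_sqrt hK0.le
  nlinarith [hsK, hc]
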